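/- For every k ≥ 1 and j ≥ 0, the element [a,b]^k b^j of the free group F(a,b) is not quasi-positive. -/

import Mathlib

/-- Quasi-positive: a (possibly empty) product of conjugates of generators. -/
def QuasiPositive {X : Type*} (w : FreeGroup X) : Prop :=
  ∃ l : List (X × FreeGroup X),
    w = (l.map fun p => p.2⁻¹ * FreeGroup.of p.1 * p.2).prod

/-- The generator `a` of the free group on two generators. -/
def a : FreeGroup Bool := FreeGroup.of true

/-- The generator `b` of the free group on two generators. -/
def b : FreeGroup Bool := FreeGroup.of false

namespace QPAux

/-- indicator of 0 -/
def δ : ℤ → ℤ := fun n => if n = 0 then 1 else 0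

lemma δ_nonneg (n : ℤ) : 0 ≤ δ n := by unfold δ; split <;> norm_num

/-- shift permutation -/
def S : Equiv.Perm (ℤ → ℤ) where
  toFun f := fun n => f (n + 1)
  invFun f := fun n => f (n - 1)
  left_inv f := funext fun n => by simp
  right_inv f := funext fun n => by simp

/-- translation by δ -/
def T : Equiv.Perm (ℤ → ℤ) where
  toFun f := fun n => f n + δ n
  invFun f := fun n => f n - δ n
  left_inv f := funext fun n => by simp
  right_inv f := funext fun n => by simp

lemma S_apply (f : ℤ → ℤ) (n : ℤ) : S f n = f (n + 1) := rfl
lemma Sinv_apply (f : ℤ → ℤ) (n : ℤ) : S⁻¹ f n = f (n - 1) := rfl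
lemma T_apply (f : ℤ → ℤ) (n : ℤ) : T f n = f n + δ n := rfl
lemma Tinv_apply (f : ℤ → ℤ) (n : ℤ) : T⁻¹ f n = f n - δ n := rfl

def φ : FreeGroup Bool →* Equiv.Perm (ℤ → ℤ) :=
  FreeGroup.lift fun x => if x then S else T

@[simp] lemma φ_of_true : φ (FreeGroup.of true) = S := by
  rw [φ, FreeGroup.lift_apply_of]; rfl

@[simp] lemma φ_of_false : φ (FreeGroup.of false) = T := by
  rw [φ, FreeGroup.lift_apply_of]; rfl

@[simp] lemma φ_a : φ a = S := φ_of_true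
@[simp] lemma φ_b : φ b = T := φ_of_false

def Affine (e : Equiv.Perm (ℤ → ℤ)) (m : ℤ) (q : ℤ → ℤ) : Prop :=
  ∀ f n, e f n = f (n + m) + q n

lemma Affine.inv {e : Equiv.Perm (ℤ → ℤ)} {m q} (h : Affine e m q) :
    Affine e⁻¹ (-m) (fun n => -q (n - m)) := by
  intro f n
  have key : e⁻¹ f = fun n => f (n - m) - q (n - m) := by
    rw [Equiv.Perm.inv_def, Equiv.symm_apply_eq]
    funext n
    rw [h]
    simp
  rw [key]
  simp [sub_eq_add_neg]

lemma Affine.mul {e₁ e₂ : Equiv.Perm (ℤ → ℤ)} {m₁ m₂ q₁ q₂}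
    (h₁ : Affine e₁ m₁ q₁) (h₂ : Affine e₂ m₂ q₂) :
    Affine (e₁ * e₂) (m₁ + m₂) (fun n => q₂ (n + m₁) + q₁ n) := by
  intro f n
  have : (e₁ * e₂) f = e₁ (e₂ f) := rfl
  rw [this, h₁, h₂, add_assoc, add_assoc]

lemma affine_exists (w : FreeGroup Bool) : ∃ m q, Affine (φ w) m q := by
  induction w using FreeGroup.induction_on with
  | C1 => exact ⟨0, 0, fun f n => by simp⟩
  | of x =>
    have hp : (pure x : FreeGroup Bool) = FreeGroup.of x := rfl
    cases x
    · exact ⟨0, δ, fun f n => by rw [φ_of_false, T_apply]; simp⟩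
    · exact ⟨1, 0, fun f n => by rw [φ_of_true, S_apply]; simp⟩
  | inv_of x ih =>
    obtain ⟨m, q, h⟩ := ih
    exact ⟨-m, _, by rw [map_inv]; exact h.inv⟩
  | mul x y ihx ihy =>
    obtain ⟨m₁, q₁, h₁⟩ := ihx
    obtain ⟨m₂, q₂, h₂⟩ := ihy
    exact ⟨m₁ + m₂, _, by rw [map_mul]; exact h₁.mul h₂⟩

lemma factor_false (g : FreeGroup Bool) :
    ∃ μ : ℤ, ∀ f n, φ (g⁻¹ * FreeGroup.of false * g) f n = f n + δ (n - μ) := by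
  obtain ⟨m, q, h⟩ := affine_exists g
  refine ⟨m, fun f n => ?_⟩
  have hφ : φ (g⁻¹ * FreeGroup.of false * g) f = (φ g)⁻¹ (T ((φ g) f)) := by
    simp [map_mul, map_inv, Equiv.Perm.mul_apply]
  rw [hφ, h.inv]
  show T ((φ g) f) (n + -m) + -q (n - m) = _
  rw [T_apply, h]
  have e1 : n + -m + m = n := by ring
  have e2 : n + -m = n - m := by ring
  rw [e1, e2]
  ring

lemma factor_true (g : FreeGroup Bool) :
    ∃ q : ℤ → ℤ, Affine (φ (g⁻¹ * FreeGroup.of true * g)) 1 q := by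
  obtain ⟨m, q, h⟩ := affine_exists g
  refine ⟨fun n => q (n - m + 1) - q (n - m), fun f n => ?_⟩
  have hφ : φ (g⁻¹ * FreeGroup.of true * g) f = (φ g)⁻¹ (S ((φ g) f)) := by
    simp [map_mul, map_inv, Equiv.Perm.mul_apply]
  rw [hφ, h.inv]
  show S ((φ g) f) (n + -m) + -q (n - m) = _
  rw [S_apply, h]
  have e1 : n + -m + 1 + m = n + 1 := by ring
  have e2 : n + -m + 1 = n - m + 1 := by ring
  rw [e1, e2]
  ring

lemma prod_lemma (l : List (Bool × FreeGroup Bool)) :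
    ∃ m q, Affine (φ ((l.map fun p => p.2⁻¹ * FreeGroup.of p.1 * p.2).prod)) m q ∧
      0 ≤ m ∧ (m = 0 → ∀ n, 0 ≤ q n) := by
  induction l with
  | nil => exact ⟨0, 0, fun f n => by simp, le_refl _, fun _ n => le_refl _⟩
  | cons p l ih =>
    obtain ⟨m₂, q₂, h₂, hm₂, hq₂⟩ := ih
    have hprod : ((p :: l).map fun p => p.2⁻¹ * FreeGroup.of p.1 * p.2).prod
        = (p.2⁻¹ * FreeGroup.of p.1 * p.2) * ((l.map fun p => p.2⁻¹ * FreeGroup.of p.1 * p.2).prod) := by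
      simp
    rcases Bool.eq_false_or_eq_true p.1 with hb | hb
    · obtain ⟨qf, hfa'⟩ := factor_true p.2
      have hfa : Affine (φ (p.2⁻¹ * FreeGroup.of p.1 * p.2)) 1 qf := by rw [hb]; exact hfa'
      refine ⟨1 + m₂, fun n => q₂ (n + 1) + qf n, ?_, by omega, by omega⟩
      rw [hprod, map_mul]; exact hfa.mul h₂
    · obtain ⟨μ, hf⟩ := factor_false p.2
      have hfa : Affine (φ (p.2⁻¹ * FreeGroup.of p.1 * p.2)) 0 (fun n => δ (n - μ)) := by
        intro f n
        rw [hb, hf]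
        simp
      refine ⟨0 + m₂, fun n => q₂ (n + 0) + δ (n - μ), ?_, by omega, ?_⟩
      · rw [hprod, map_mul]; exact hfa.mul h₂
      · intro hm n
        have hm0 : m₂ = 0 := by omega
        have h1 := hq₂ hm0 (n + 0)
        have h2 := δ_nonneg (n - μ)
        positivity

lemma affine_unique {e : Equiv.Perm (ℤ → ℤ)} {m m' q q'}
    (h : Affine e m q) (h' : Affine e m' q') : m = m' ∧ ∀ n, q n = q' n := by
  have hq : ∀ n, q n = q' n := by
    intro n
    have h1 := h (fun _ => 0) n
    have h2 := h' (fun _ => 0) n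
    simp at h1 h2
    omega
  refine ⟨?_, hq⟩
  have h1 := h (fun x => x) 0
  have h2 := h' (fun x => x) 0
  have h3 := hq 0
  simp at h1 h2
  omega

lemma affine_pow {e : Equiv.Perm (ℤ → ℤ)} {q} (h : Affine e 0 q) :
    ∀ k : ℕ, Affine (e ^ k) 0 (fun n => k * q n) := by
  intro k
  induction k with
  | zero => intro f n; simp
  | succ k ih =>
    rw [pow_succ]
    intro f n
    rw [(ih.mul h) f n]
    push_cast
    ring_nf

lemma φ_comm : Affine (φ (a⁻¹ * b⁻¹ * a * b)) 0 (fun n => δ n - δ (n - 1)) := by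
  intro f n
  simp only [map_mul, map_inv, φ_a, φ_b, Equiv.Perm.mul_apply,
    Sinv_apply, Tinv_apply, S_apply, T_apply]
  have e1 : n - 1 + 1 = n := by ring
  rw [e1]
  simp
  ring

end QPAux

open QPAux in
theorem commutator_power_times_b_power_not_quasiPositive :
    ∀ k j : ℕ, 1 ≤ k → ¬ QuasiPositive ((a⁻¹ * b⁻¹ * a * b) ^ k * b ^ j) := by
  rintro k j hk ⟨l, hl⟩
  obtain ⟨m, q, hA, hm, hq⟩ := prod_lemma l
  rw [← hl] at hA
  have hbj : Affine (φ (b ^ j)) 0 (fun n => (j : ℤ) * δ n) := by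
    rw [map_pow]
    exact affine_pow (fun f n => by rw [φ_b, T_apply]; simp) j
  have hck : Affine (φ ((a⁻¹ * b⁻¹ * a * b) ^ k)) 0
      (fun n => (k : ℤ) * (δ n - δ (n - 1))) := by
    rw [map_pow]
    exact affine_pow φ_comm k
  have hw : Affine (φ ((a⁻¹ * b⁻¹ * a * b) ^ k * b ^ j)) (0 + 0)
      (fun n => (j : ℤ) * δ (n + 0) + (k : ℤ) * (δ n - δ (n - 1))) := by
    rw [map_mul]
    exact hck.mul hbj
  obtain ⟨hm0, hqq⟩ := affine_unique hA hw
  have hq1 := hq (by omega) 1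
  have h1 := hqq 1
  simp [δ] at h1
  omega
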